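/- arXiv:1809.02244 — 5 statements merged into one kernel-verified Lean document; each statement's English description precedes it below -/
import Mathlib

section
/- Let S be a binary random variable and X, M, Y random variables on a finite probability space with joint density p, where p(S=s|X=x) > 0 and p(M=m|S=s,X=x) > 0 for all values. Then the inverse-probability-weighted functional E[(1{S=s}/p(S|X)) * (p(M|s',X)/p(M|s,X)) * Y] equals the mediation functional sum over x,m of E[Y | S=s, M=m, X=x] * p(M=m | S=s', X=x) * p(X=x). -/
open Finset

/-- IPW identity for the mediation functional (population version of the
IPW estimator of PSE^{sy}, Theorem 1 of Nabi, Malinsky, Shpitser 2019). -/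
theorem stmt0
    {Ω 𝓧 𝓜 : Type*} [Fintype Ω] [Fintype 𝓧] [Fintype 𝓜]
    [DecidableEq 𝓧] [DecidableEq 𝓜]
    (μ : Ω → ℝ) (hμ : ∀ ω, 0 ≤ μ ω) (hμ1 : ∑ ω, μ ω = 1)
    (Xv : Ω → 𝓧) (Sv : Ω → Bool) (Mv : Ω → 𝓜) (Yv : Ω → ℝ)
    (s s' : Bool)
    (pX : 𝓧 → ℝ) (hpX : ∀ x, pX x = ∑ ω, if Xv ω = x then μ ω else 0)
    (pSX : Bool → 𝓧 → ℝ)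
    (hpSX : ∀ sv x, pSX sv x
      = (∑ ω, if Sv ω = sv ∧ Xv ω = x then μ ω else 0) / pX x)
    (pMSX : 𝓜 → Bool → 𝓧 → ℝ)
    (hpMSX : ∀ m sv x, pMSX m sv x
      = (∑ ω, if Mv ω = m ∧ Sv ω = sv ∧ Xv ω = x then μ ω else 0)
        / (∑ ω, if Sv ω = sv ∧ Xv ω = x then μ ω else 0))
    (condY : Bool → 𝓜 → 𝓧 → ℝ)
    (hcondY : ∀ sv m x, condY sv m x
      = (∑ ω, if Sv ω = sv ∧ Mv ω = m ∧ Xv ω = x then μ ω * Yv ω else 0)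
        / (∑ ω, if Sv ω = sv ∧ Mv ω = m ∧ Xv ω = x then μ ω else 0))
    (hposS : ∀ sv x, 0 < pSX sv x)
    (hposM : ∀ m sv x, 0 < pMSX m sv x) :
    ∑ ω, μ ω * ((if Sv ω = s then (1:ℝ) else 0) / pSX (Sv ω) (Xv ω))
        * (pMSX (Mv ω) s' (Xv ω) / pMSX (Mv ω) s (Xv ω)) * Yv ω
      = ∑ x, ∑ m, condY s m x * pMSX m s' x * pX x := by
  -- positivity of pX
  have hXne : ∀ x, pX x ≠ 0 := by
    intro x hx
    have h := hposS s x
    rw [hpSX, hx, div_zero] at h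
    exact lt_irrefl 0 h
  -- A x = P(S=s, X=x)
  have hA : ∀ x, (∑ ω, if Sv ω = s ∧ Xv ω = x then μ ω else 0)
      = pSX s x * pX x := fun x =>
    ((eq_div_iff (hXne x)).mp (hpSX s x)).symm
  have hXpos : ∀ x, 0 < pX x := by
    intro x
    have h0 : 0 ≤ pX x := by
      rw [hpX]
      exact Finset.sum_nonneg fun ω _ => by split_ifs with h; exacts [hμ ω, le_rfl]
    exact h0.lt_of_ne (Ne.symm (hXne x))
  have hAne : ∀ x, (∑ ω, if Sv ω = s ∧ Xv ω = x then μ ω else 0) ≠ 0 := by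
    intro x
    rw [hA]
    exact (mul_pos (hposS s x) (hXpos x)).ne' 
  -- B m x = P(M=m, S=s, X=x)
  have hB : ∀ m x, (∑ ω, if Mv ω = m ∧ Sv ω = s ∧ Xv ω = x then μ ω else 0)
      = pMSX m s x * (pSX s x * pX x) := by
    intro m x
    have := (eq_div_iff (hAne x)).mp (hpMSX m s x)
    rw [← this, hA]
  have hB' : ∀ m x, (∑ ω, if Sv ω = s ∧ Mv ω = m ∧ Xv ω = x then μ ω else 0)
      = pMSX m s x * (pSX s x * pX x) := by
    intro m x
    rw [← hB m x]
    exact Finset.sum_congr rfl fun ω _ => if_congr (by tauto) rfl rfl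
  set F : Ω → ℝ := fun ω =>
    μ ω * ((if Sv ω = s then (1:ℝ) else 0) / pSX (Sv ω) (Xv ω))
      * (pMSX (Mv ω) s' (Xv ω) / pMSX (Mv ω) s (Xv ω)) * Yv ω with hF
  have swap : ∑ ω, F ω
      = ∑ x, ∑ m, ∑ ω, (if Xv ω = x ∧ Mv ω = m then F ω else 0) := by
    calc ∑ ω, F ω
        = ∑ ω, ∑ x, ∑ m, (if Xv ω = x ∧ Mv ω = m then F ω else 0) := by
          refine Finset.sum_congr rfl fun ω _ => ?_
          simp [ite_and, Finset.sum_ite_eq]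
      _ = ∑ x, ∑ ω, ∑ m, (if Xv ω = x ∧ Mv ω = m then F ω else 0) :=
          Finset.sum_comm
      _ = ∑ x, ∑ m, ∑ ω, (if Xv ω = x ∧ Mv ω = m then F ω else 0) :=
          Finset.sum_congr rfl fun _ _ => Finset.sum_comm
  rw [swap]
  refine Finset.sum_congr rfl fun x _ => Finset.sum_congr rfl fun m _ => ?_
  have hpoint : ∀ ω, (if Xv ω = x ∧ Mv ω = m then F ω else 0)
      = (if Sv ω = s ∧ Mv ω = m ∧ Xv ω = x then μ ω * Yv ω else 0)
        * (pMSX m s' x / (pSX s x * pMSX m s x)) := by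
    intro ω
    by_cases hx : Xv ω = x
    · by_cases hm : Mv ω = m
      · by_cases hs : Sv ω = s
        · simp only [hx, hm, hs, and_self, if_true, true_and, hF]
          field_simp
        · simp only [hx, hm, hs, and_self, if_true, true_and, if_false, hF,
            and_false, false_and]
          simp [hs]
      · simp [hx, hm]
    · simp [hx]
  calc ∑ ω, (if Xv ω = x ∧ Mv ω = m then F ω else 0)
      = (∑ ω, if Sv ω = s ∧ Mv ω = m ∧ Xv ω = x then μ ω * Yv ω else 0)
        * (pMSX m s' x / (pSX s x * pMSX m s x)) := by
        rw [Finset.sum_mul]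
        exact Finset.sum_congr rfl fun ω _ => hpoint ω
    _ = condY s m x * pMSX m s' x * pX x := by
        rw [hcondY, hB']
        have h1 := (hposS s x).ne'
        have h2 := (hposM m s x).ne'
        field_simp [h1, h2, hXne x]
end

section
/- Let S be binary and define PSE^{sy}(p) = sum_{x,m} (E_p[Y|s,m,x] - E_p[Y|s',m,x]) p(m|s',x) p(x). Then PSE^{sy}(p) = E[(1{S=s}/p(S|X)) * (p(M|s',X)/p(M|s,X)) * Y] - E[(1{S=s'}/p(S|X)) * Y], assuming all conditioning events have positive probability. -/
open Finset

lemma group_aux {Ω 𝓧 𝓜 : Type*} [Fintype Ω] [Fintype 𝓧] [Fintype 𝓜]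
    [DecidableEq 𝓧] [DecidableEq 𝓜]
    (Xv : Ω → 𝓧) (Mv : Ω → 𝓜) (P : Ω → Prop) [DecidablePred P]
    (h : 𝓜 → 𝓧 → ℝ) (k : Ω → ℝ) :
    ∑ ω, (if P ω then h (Mv ω) (Xv ω) * k ω else 0)
      = ∑ x, ∑ m, h m x * ∑ ω, (if P ω ∧ Mv ω = m ∧ Xv ω = x then k ω else 0) := by
  simp_rw [Finset.mul_sum, mul_ite, mul_zero]
  have key : ∀ ω, (if P ω then h (Mv ω) (Xv ω) * k ω else 0)
      = ∑ x, ∑ m, (if P ω ∧ Mv ω = m ∧ Xv ω = x then h m x * k ω else 0) := by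
    intro ω
    by_cases hP : P ω
    · simp [hP, ite_and, Finset.sum_ite_eq, Finset.sum_ite_eq']
    · simp [hP]
  simp_rw [key]
  rw [Finset.sum_comm]
  exact Finset.sum_congr rfl fun x _ => Finset.sum_comm

/-- Theorem 1 of Nabi, Malinsky, Shpitser (2019): the path-specific effect
PSE^{sy}, identified by the mediation formula, equals the difference of two
inverse-probability-weighted functionals. -/
theorem stmt1
    {Ω 𝓧 𝓜 : Type*} [Fintype Ω] [Fintype 𝓧] [Fintype 𝓜]
    [DecidableEq 𝓧] [DecidableEq 𝓜]
    (μ : Ω → ℝ) (hμ : ∀ ω, 0 ≤ μ ω) (hμ1 : ∑ ω, μ ω = 1)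
    (Xv : Ω → 𝓧) (Sv : Ω → Bool) (Mv : Ω → 𝓜) (Yv : Ω → ℝ)
    (s s' : Bool)
    (pX : 𝓧 → ℝ) (hpX : ∀ x, pX x = ∑ ω, if Xv ω = x then μ ω else 0)
    (pSX : Bool → 𝓧 → ℝ)
    (hpSX : ∀ sv x, pSX sv x
      = (∑ ω, if Sv ω = sv ∧ Xv ω = x then μ ω else 0) / pX x)
    (pMSX : 𝓜 → Bool → 𝓧 → ℝ)
    (hpMSX : ∀ m sv x, pMSX m sv x
      = (∑ ω, if Mv ω = m ∧ Sv ω = sv ∧ Xv ω = x then μ ω else 0)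
        / (∑ ω, if Sv ω = sv ∧ Xv ω = x then μ ω else 0))
    (condY : Bool → 𝓜 → 𝓧 → ℝ)
    (hcondY : ∀ sv m x, condY sv m x
      = (∑ ω, if Sv ω = sv ∧ Mv ω = m ∧ Xv ω = x then μ ω * Yv ω else 0)
        / (∑ ω, if Sv ω = sv ∧ Mv ω = m ∧ Xv ω = x then μ ω else 0))
    (hposS : ∀ sv x, 0 < pSX sv x)
    (hposM : ∀ m sv x, 0 < pMSX m sv x) :
    ∑ x, ∑ m, (condY s m x - condY s' m x) * pMSX m s' x * pX x
      = (∑ ω, μ ω * ((if Sv ω = s then (1:ℝ) else 0) / pSX (Sv ω) (Xv ω))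
            * (pMSX (Mv ω) s' (Xv ω) / pMSX (Mv ω) s (Xv ω)) * Yv ω)
        - ∑ ω, μ ω * ((if Sv ω = s' then (1:ℝ) else 0) / pSX (Sv ω) (Xv ω)) * Yv ω := by
  -- abbreviations
  set A : Bool → 𝓧 → ℝ := fun sv x => ∑ ω, if Sv ω = sv ∧ Xv ω = x then μ ω else 0 with hA
  set B : 𝓜 → Bool → 𝓧 → ℝ :=
    fun m sv x => ∑ ω, if Mv ω = m ∧ Sv ω = sv ∧ Xv ω = x then μ ω else 0 with hB
  set C : Bool → 𝓜 → 𝓧 → ℝ :=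
    fun sv m x => ∑ ω, if Sv ω = sv ∧ Mv ω = m ∧ Xv ω = x then μ ω * Yv ω else 0 with hC
  set D : Bool → 𝓜 → 𝓧 → ℝ :=
    fun sv m x => ∑ ω, if Sv ω = sv ∧ Mv ω = m ∧ Xv ω = x then μ ω else 0 with hD
  -- D = B with reordered conjunction
  have hDB : ∀ sv m x, D sv m x = B m sv x := by
    intro sv m x
    exact Finset.sum_congr rfl fun ω _ => if_congr (by tauto) rfl rfl
  -- positivity
  have hApos : ∀ sv x, 0 < A sv x := by
    intro sv x
    rcases lt_or_ge 0 (A sv x) with h | h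
    · exact h
    · have h0 : A sv x = 0 := le_antisymm h (Finset.sum_nonneg fun ω _ => by
        split <;> simp [hμ ω])
      have := hposS sv x
      rw [hpSX sv x] at this
      rw [show (∑ ω, if Sv ω = sv ∧ Xv ω = x then μ ω else 0) = A sv x from rfl, h0] at this
      simp at this
  have hpXpos : ∀ x, 0 < pX x := by
    intro x
    rcases lt_or_ge 0 (pX x) with h | h
    · exact h
    · have := hposS true x
      rw [hpSX true x] at this
      have hz : pX x = 0 := le_antisymm h (by
        rw [hpX x]; exact Finset.sum_nonneg fun ω _ => by split <;> simp [hμ ω])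
      rw [hz] at this
      simp at this
  have hBpos : ∀ m sv x, 0 < B m sv x := by
    intro m sv x
    rcases lt_or_ge 0 (B m sv x) with h | h
    · exact h
    · have h0 : B m sv x = 0 := le_antisymm h (Finset.sum_nonneg fun ω _ => by
        split <;> simp [hμ ω])
      have := hposM m sv x
      rw [hpMSX m sv x] at this
      rw [show (∑ ω, if Mv ω = m ∧ Sv ω = sv ∧ Xv ω = x then μ ω else 0) = B m sv x from rfl,
        h0] at this
      simp at this
  -- rewrite first RHS sum
  have h1 : (∑ ω, μ ω * ((if Sv ω = s then (1:ℝ) else 0) / pSX (Sv ω) (Xv ω))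
        * (pMSX (Mv ω) s' (Xv ω) / pMSX (Mv ω) s (Xv ω)) * Yv ω)
      = ∑ x, ∑ m, (pMSX m s' x / pMSX m s x / pSX s x) * C s m x := by
    have e1 : ∀ ω, μ ω * ((if Sv ω = s then (1:ℝ) else 0) / pSX (Sv ω) (Xv ω))
        * (pMSX (Mv ω) s' (Xv ω) / pMSX (Mv ω) s (Xv ω)) * Yv ω
        = (if Sv ω = s then
            (pMSX (Mv ω) s' (Xv ω) / pMSX (Mv ω) s (Xv ω) / pSX s (Xv ω)) * (μ ω * Yv ω)
          else 0) := by
      intro ω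
      by_cases hs : Sv ω = s
      · rw [if_pos hs, if_pos hs, hs]; ring
      · rw [if_neg hs, if_neg hs]; ring
    simp_rw [e1, hC]
    exact group_aux Xv Mv (fun ω => Sv ω = s)
      (fun m x => pMSX m s' x / pMSX m s x / pSX s x) (fun ω => μ ω * Yv ω)
  -- rewrite second RHS sum
  have h2 : (∑ ω, μ ω * ((if Sv ω = s' then (1:ℝ) else 0) / pSX (Sv ω) (Xv ω)) * Yv ω)
      = ∑ x, ∑ m, (1 / pSX s' x) * C s' m x := by
    have e2 : ∀ ω, μ ω * ((if Sv ω = s' then (1:ℝ) else 0) / pSX (Sv ω) (Xv ω)) * Yv ω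
        = (if Sv ω = s' then (1 / pSX s' (Xv ω)) * (μ ω * Yv ω) else 0) := by
      intro ω
      by_cases hs : Sv ω = s'
      · rw [if_pos hs, if_pos hs, hs]; ring
      · rw [if_neg hs, if_neg hs]; ring
    simp_rw [e2, hC]
    exact group_aux Xv Mv (fun ω => Sv ω = s')
      (fun _ x => 1 / pSX s' x) (fun ω => μ ω * Yv ω)
  rw [h1, h2, ← Finset.sum_sub_distrib]
  refine Finset.sum_congr rfl fun x _ => ?_
  rw [← Finset.sum_sub_distrib]
  refine Finset.sum_congr rfl fun m _ => ?_
  -- per-cell identity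
  rw [hcondY s m x, hcondY s' m x, hpMSX m s' x, hpMSX m s x, hpSX s x, hpSX s' x]
  have rD : ∀ sv, (∑ ω, if Sv ω = sv ∧ Mv ω = m ∧ Xv ω = x then μ ω else 0) = B m sv x := by
    intro sv; rw [show (∑ ω, if Sv ω = sv ∧ Mv ω = m ∧ Xv ω = x then μ ω else 0)
      = D sv m x from rfl, hDB]
  rw [rD, rD]
  have hAs := (hApos s x).ne'
  have hAs' := (hApos s' x).ne'
  have hBs := (hBpos m s x).ne'
  have hBs' := (hBpos m s' x).ne'
  have hpx := (hpXpos x).ne'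
  rw [show (∑ ω, if Sv ω = s ∧ Mv ω = m ∧ Xv ω = x then μ ω * Yv ω else 0) = C s m x from rfl,
    show (∑ ω, if Sv ω = s' ∧ Mv ω = m ∧ Xv ω = x then μ ω * Yv ω else 0) = C s' m x from rfl,
    show (∑ ω, if Mv ω = m ∧ Sv ω = s ∧ Xv ω = x then μ ω else 0) = B m s x from rfl,
    show (∑ ω, if Mv ω = m ∧ Sv ω = s' ∧ Xv ω = x then μ ω else 0) = B m s' x from rfl,
    show (∑ ω, if Sv ω = s ∧ Xv ω = x then μ ω else 0) = A s x from rfl,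
    show (∑ ω, if Sv ω = s' ∧ Xv ω = x then μ ω else 0) = A s' x from rfl]
  field_simp
end

section
/- Let Z = (X, A, Y) be discrete random variables with p(A=a|X=x) > 0 for all x and a policy f: range(X) -> range(A). Then the IPW identity holds: E[ (1{A = f(X)} / p(A | X)) * Y ] = sum_x p(X=x) E[Y | X=x, A=f(x)]. -/
open Finset

/-- Single-stage population IPW identity: the inverse-probability-weighted
expectation of the outcome under agreement with policy f equals the
g-formula value of the policy f. -/
theorem stmt6
    {Ω 𝓧 𝓐 : Type*} [Fintype Ω] [Fintype 𝓧] [Fintype 𝓐]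
    [DecidableEq 𝓧] [DecidableEq 𝓐]
    (μ : Ω → ℝ) (hμ : ∀ ω, 0 ≤ μ ω) (hμ1 : ∑ ω, μ ω = 1)
    (Xv : Ω → 𝓧) (Av : Ω → 𝓐) (Yv : Ω → ℝ)
    (pX : 𝓧 → ℝ) (hpX : ∀ x, pX x = ∑ ω, if Xv ω = x then μ ω else 0)
    (pAX : 𝓐 → 𝓧 → ℝ)
    (hpAX : ∀ a x, pAX a x
      = (∑ ω, if Av ω = a ∧ Xv ω = x then μ ω else 0) / pX x)
    (condY : 𝓧 → 𝓐 → ℝ)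
    (hcondY : ∀ x a, condY x a
      = (∑ ω, if Xv ω = x ∧ Av ω = a then μ ω * Yv ω else 0)
        / (∑ ω, if Xv ω = x ∧ Av ω = a then μ ω else 0))
    (hposA : ∀ a x, 0 < pAX a x)
    (f : 𝓧 → 𝓐) :
    ∑ ω, ((if Av ω = f (Xv ω) then (1:ℝ) else 0) / pAX (Av ω) (Xv ω)) * Yv ω * μ ω
      = ∑ x, pX x * condY x (f x) := by
  -- pX is positive
  have hpXpos : ∀ x, 0 < pX x := by
    intro x
    rcases eq_or_ne (pX x) 0 with h | h
    · exfalso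
      have := hposA (f x) x
      rw [hpAX, h, div_zero] at this
      exact lt_irrefl 0 this
    · have h0 : 0 ≤ pX x := by
        rw [hpX]
        exact Finset.sum_nonneg fun ω _ => by split; exacts [hμ ω, le_refl 0]
      exact lt_of_le_of_ne h0 (Ne.symm h)
  -- denominator equals pAX * pX
  have hden : ∀ x a, (∑ ω, if Xv ω = x ∧ Av ω = a then μ ω else 0)
      = pAX a x * pX x := by
    intro x a
    rw [hpAX, div_mul_cancel₀ _ (hpXpos x).ne']
    congr 1; funext ω
    simp [and_comm]
  -- fiberwise decomposition of LHS
  have key : (∑ ω, ((if Av ω = f (Xv ω) then (1:ℝ) else 0) / pAX (Av ω) (Xv ω)) * Yv ω * μ ω)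
      = ∑ x, ∑ ω, if Xv ω = x then
          ((if Av ω = f (Xv ω) then (1:ℝ) else 0) / pAX (Av ω) (Xv ω)) * Yv ω * μ ω else 0 := by
    rw [Finset.sum_comm]
    apply Finset.sum_congr rfl
    intro ω _
    simp
  rw [key]
  apply Finset.sum_congr rfl
  intro x _
  have hinner : (∑ ω, if Xv ω = x then
        ((if Av ω = f (Xv ω) then (1:ℝ) else 0) / pAX (Av ω) (Xv ω)) * Yv ω * μ ω else 0)
      = (∑ ω, if Xv ω = x ∧ Av ω = f x then μ ω * Yv ω else 0) / pAX (f x) x := by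
    rw [Finset.sum_div]
    apply Finset.sum_congr rfl
    intro ω _
    by_cases hx : Xv ω = x
    · by_cases ha : Av ω = f x
      · simp [hx, ha]; ring
      · simp [hx, ha]
    · simp [hx]
  rw [hinner, hcondY, hden]
  have h1 : pAX (f x) x ≠ 0 := (hposA (f x) x).ne'
  have h2 : pX x ≠ 0 := (hpXpos x).ne'
  field_simp
end

section
/- In the two-stage setting with variables X, A_1, Y_1, A_2, Y_2 and joint distribution factorizing according to the complete DAG in topological order, for policies f_1, f_2 with positivity of propensities pi_1(a_1|x) and pi_2(a_2|x,a_1,y_1), the double product IPW identity holds: E[ (1{A_1=f_1(H_1)}/pi_1(A_1|H_1)) * (1{A_2=f_2(H_2)}/pi_2(A_2|H_2)) * Y_2 ] = E[Y_2(f_1, f_2)], where E[Y_2(f_1,f_2)] is given by the g-formula sum_{x,y_1,y_2} y_2 * p(x) p(y_1 | x, f_1(x)) p(y_2 | x, f_1(x), y_1, f_2(x, f_1(x), y_1)). -/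
open Finset

/-- Two-stage sequential IPW identity (population version of Eq. (7) for K=2):
the double-product IPW expectation equals the g-formula value E[Y_2(f_1,f_2)]. -/
theorem stmt7
    {𝓧 𝓐₁ 𝓨₁ 𝓐₂ 𝓨₂ : Type*}
    [Fintype 𝓧] [Fintype 𝓐₁] [Fintype 𝓨₁] [Fintype 𝓐₂] [Fintype 𝓨₂]
    [DecidableEq 𝓐₁] [DecidableEq 𝓐₂]
    (y2val : 𝓨₂ → ℝ)
    (pX : 𝓧 → ℝ) (hpX : ∀ x, 0 ≤ pX x) (hpXs : ∑ x, pX x = 1)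
    (π₁ : 𝓐₁ → 𝓧 → ℝ) (hπ₁pos : ∀ a x, 0 < π₁ a x) (hπ₁s : ∀ x, ∑ a, π₁ a x = 1)
    (pY₁ : 𝓨₁ → 𝓧 → 𝓐₁ → ℝ) (hpY₁ : ∀ y x a, 0 ≤ pY₁ y x a)
    (hpY₁s : ∀ x a, ∑ y, pY₁ y x a = 1)
    (π₂ : 𝓐₂ → 𝓧 → 𝓐₁ → 𝓨₁ → ℝ) (hπ₂pos : ∀ a₂ x a₁ y₁, 0 < π₂ a₂ x a₁ y₁)
    (hπ₂s : ∀ x a₁ y₁, ∑ a₂, π₂ a₂ x a₁ y₁ = 1)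
    (pY₂ : 𝓨₂ → 𝓧 → 𝓐₁ → 𝓨₁ → 𝓐₂ → ℝ) (hpY₂ : ∀ y₂ x a₁ y₁ a₂, 0 ≤ pY₂ y₂ x a₁ y₁ a₂)
    (hpY₂s : ∀ x a₁ y₁ a₂, ∑ y₂, pY₂ y₂ x a₁ y₁ a₂ = 1)
    (f₁ : 𝓧 → 𝓐₁) (f₂ : 𝓧 → 𝓐₁ → 𝓨₁ → 𝓐₂) :
    ∑ x, ∑ a₁, ∑ y₁, ∑ a₂, ∑ y₂,
        pX x * π₁ a₁ x * pY₁ y₁ x a₁ * π₂ a₂ x a₁ y₁ * pY₂ y₂ x a₁ y₁ a₂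
          * ((if a₁ = f₁ x then (1:ℝ) else 0) / π₁ a₁ x)
          * ((if a₂ = f₂ x a₁ y₁ then (1:ℝ) else 0) / π₂ a₂ x a₁ y₁)
          * y2val y₂
      = ∑ x, ∑ y₁, ∑ y₂,
          y2val y₂ * pX x * pY₁ y₁ x (f₁ x)
            * pY₂ y₂ x (f₁ x) y₁ (f₂ x (f₁ x) y₁) := by
  refine Finset.sum_congr rfl fun x _ => ?_
  rw [Finset.sum_comm]
  refine Finset.sum_congr rfl fun y₁ _ => ?_
  rw [Finset.sum_eq_single (f₁ x)]
  · rw [Finset.sum_comm]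
    refine Finset.sum_congr rfl fun y₂ _ => ?_
    rw [Finset.sum_eq_single (f₂ x (f₁ x) y₁)]
    · have h1 := (hπ₁pos (f₁ x) x).ne'
      have h2 := (hπ₂pos (f₂ x (f₁ x) y₁) x (f₁ x) y₁).ne'
      simp only [if_pos rfl]
      field_simp
      simp
    · intro a₂ _ h; simp [h]
    · intro h; exact absurd (Finset.mem_univ _) h
  · intro a₁ _ h; simp [h]
  · intro h; exact absurd (Finset.mem_univ _) h
end

section
/- Let S be binary, and X, M, A discrete, with joint density p and positivity. Then E[(1{S=s}/p(S|X)) * (p(M|s',X)/p(M|s,X)) * A] - E[(1{S=s'}/p(S|X)) * A] = sum_{x,m} (E[A | S=s, M=m, X=x] - E[A | S=s', M=m, X=x]) p(M=m | S=s', X=x) p(X=x). -/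
open Finset

/-- The PSE^{sa} identity of Theorem 1 of Nabi, Malinsky, Shpitser (2019),
applied to a real-valued decision variable A in place of the outcome Y. -/
theorem stmt9
    {Ω 𝓧 𝓜 : Type*} [Fintype Ω] [Fintype 𝓧] [Fintype 𝓜]
    [DecidableEq 𝓧] [DecidableEq 𝓜]
    (μ : Ω → ℝ) (hμ : ∀ ω, 0 ≤ μ ω) (hμ1 : ∑ ω, μ ω = 1)
    (Xv : Ω → 𝓧) (Sv : Ω → Bool) (Mv : Ω → 𝓜) (Av : Ω → ℝ)
    (s s' : Bool)
    (pX : 𝓧 → ℝ) (hpX : ∀ x, pX x = ∑ ω, if Xv ω = x then μ ω else 0)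
    (pSX : Bool → 𝓧 → ℝ)
    (hpSX : ∀ sv x, pSX sv x
      = (∑ ω, if Sv ω = sv ∧ Xv ω = x then μ ω else 0) / pX x)
    (pMSX : 𝓜 → Bool → 𝓧 → ℝ)
    (hpMSX : ∀ m sv x, pMSX m sv x
      = (∑ ω, if Mv ω = m ∧ Sv ω = sv ∧ Xv ω = x then μ ω else 0)
        / (∑ ω, if Sv ω = sv ∧ Xv ω = x then μ ω else 0))
    (condA : Bool → 𝓜 → 𝓧 → ℝ)
    (hcondA : ∀ sv m x, condA sv m x
      = (∑ ω, if Sv ω = sv ∧ Mv ω = m ∧ Xv ω = x then μ ω * Av ω else 0)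
        / (∑ ω, if Sv ω = sv ∧ Mv ω = m ∧ Xv ω = x then μ ω else 0))
    (hposS : ∀ sv x, 0 < pSX sv x)
    (hposM : ∀ m sv x, 0 < pMSX m sv x) :
    (∑ ω, μ ω * ((if Sv ω = s then (1:ℝ) else 0) / pSX (Sv ω) (Xv ω))
        * (pMSX (Mv ω) s' (Xv ω) / pMSX (Mv ω) s (Xv ω)) * Av ω)
      - (∑ ω, μ ω * ((if Sv ω = s' then (1:ℝ) else 0) / pSX (Sv ω) (Xv ω)) * Av ω)
      = ∑ x, ∑ m, (condA s m x - condA s' m x) * pMSX m s' x * pX x := by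
  classical
  -- positivity facts
  have hPnn : ∀ x, (0:ℝ) ≤ pX x := by
    intro x
    rw [hpX]
    exact Finset.sum_nonneg fun ω _ => by split_ifs with h; exacts [hμ ω, le_rfl]
  have hPpos : ∀ x, (0:ℝ) < pX x := by
    intro x
    rcases (hPnn x).lt_or_eq with h | h
    · exact h
    · exfalso
      have := hposS s x
      rw [hpSX, ← h, div_zero] at this
      exact lt_irrefl 0 this
  have hNpos : ∀ sv x, (0:ℝ) < ∑ ω, if Sv ω = sv ∧ Xv ω = x then μ ω else 0 := by
    intro sv x
    have hnn : (0:ℝ) ≤ ∑ ω, if Sv ω = sv ∧ Xv ω = x then μ ω else 0 :=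
      Finset.sum_nonneg fun ω _ => by split_ifs with h; exacts [hμ ω, le_rfl]
    rcases hnn.lt_or_eq with h | h
    · exact h
    · exfalso
      have := hposS sv x
      rw [hpSX, ← h, zero_div] at this
      exact lt_irrefl 0 this
  have hJpos : ∀ m sv x, (0:ℝ) < ∑ ω, if Mv ω = m ∧ Sv ω = sv ∧ Xv ω = x then μ ω else 0 := by
    intro m sv x
    have hnn : (0:ℝ) ≤ ∑ ω, if Mv ω = m ∧ Sv ω = sv ∧ Xv ω = x then μ ω else 0 :=
      Finset.sum_nonneg fun ω _ => by split_ifs with h; exacts [hμ ω, le_rfl]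
    rcases hnn.lt_or_eq with h | h
    · exact h
    · exfalso
      have := hposM m sv x
      rw [hpMSX, ← h, zero_div] at this
      exact lt_irrefl 0 this
  -- reorder conjunctions
  have hDJ : ∀ m sv x, (∑ ω, if Sv ω = sv ∧ Mv ω = m ∧ Xv ω = x then μ ω else 0)
      = ∑ ω, if Mv ω = m ∧ Sv ω = sv ∧ Xv ω = x then μ ω else 0 := by
    intro m sv x
    refine Finset.sum_congr rfl fun ω _ => ?_
    simp only [and_left_comm]
  -- grouping lemma
  have hgroup : ∀ g : Ω → ℝ,
      ∑ ω, g ω = ∑ x, ∑ m, ∑ ω, if Mv ω = m ∧ Xv ω = x then g ω else 0 := by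
    intro g
    have h1 : ∀ x : 𝓧, (∑ m, ∑ ω, if Mv ω = m ∧ Xv ω = x then g ω else 0)
        = ∑ ω, if Xv ω = x then g ω else 0 := by
      intro x
      rw [Finset.sum_comm]
      refine Finset.sum_congr rfl fun ω _ => ?_
      simp [ite_and, Finset.sum_ite_eq]
    simp_rw [h1]
    rw [Finset.sum_comm]
    refine (Finset.sum_congr rfl fun ω _ => ?_).symm
    simp [Finset.sum_ite_eq]
  rw [hgroup (fun ω => μ ω * ((if Sv ω = s then (1:ℝ) else 0) / pSX (Sv ω) (Xv ω))
        * (pMSX (Mv ω) s' (Xv ω) / pMSX (Mv ω) s (Xv ω)) * Av ω),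
     hgroup (fun ω => μ ω * ((if Sv ω = s' then (1:ℝ) else 0) / pSX (Sv ω) (Xv ω)) * Av ω)]
  rw [← Finset.sum_sub_distrib]
  refine Finset.sum_congr rfl fun x _ => ?_
  rw [← Finset.sum_sub_distrib]
  refine Finset.sum_congr rfl fun m _ => ?_
  have h1 : (∑ ω, if Mv ω = m ∧ Xv ω = x then
        μ ω * ((if Sv ω = s then (1:ℝ) else 0) / pSX (Sv ω) (Xv ω))
          * (pMSX (Mv ω) s' (Xv ω) / pMSX (Mv ω) s (Xv ω)) * Av ω else 0)
      = (∑ ω, if Sv ω = s ∧ Mv ω = m ∧ Xv ω = x then μ ω * Av ω else 0)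
        * ((1 / pSX s x) * (pMSX m s' x / pMSX m s x)) := by
    rw [Finset.sum_mul]
    refine Finset.sum_congr rfl fun ω _ => ?_
    by_cases hm : Mv ω = m
    · by_cases hx : Xv ω = x
      · by_cases hs : Sv ω = s
        · simp only [hm, hx, hs, and_self, if_true, if_pos rfl, true_and]
          ring
        · simp [hm, hx, hs]
      · simp [hx]
    · simp [hm]
  have h2 : (∑ ω, if Mv ω = m ∧ Xv ω = x then
        μ ω * ((if Sv ω = s' then (1:ℝ) else 0) / pSX (Sv ω) (Xv ω)) * Av ω else 0)
      = (∑ ω, if Sv ω = s' ∧ Mv ω = m ∧ Xv ω = x then μ ω * Av ω else 0)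
        * (1 / pSX s' x) := by
    rw [Finset.sum_mul]
    refine Finset.sum_congr rfl fun ω _ => ?_
    by_cases hm : Mv ω = m
    · by_cases hx : Xv ω = x
      · by_cases hs : Sv ω = s'
        · simp only [hm, hx, hs, and_self, if_true, if_pos rfl, true_and]
          ring
        · simp [hm, hx, hs]
      · simp [hx]
    · simp [hm]
  rw [h1, h2, hcondA s m x, hcondA s' m x, hpMSX m s' x, hpMSX m s x, hpSX s x, hpSX s' x,
    hDJ m s x, hDJ m s' x]
  have e1 := (hPpos x).ne'
  have e2 := (hNpos s x).ne'
  have e3 := (hNpos s' x).ne'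
  have e4 := (hJpos m s x).ne'
  have e5 := (hJpos m s' x).ne'
  field_simp
end
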